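/- Let θ > 0, let (θ_i)_{i≥1} be a non-negative real sequence with θ_* := sup_i θ_i < ∞ and θ*' := max(θ, θ_*), and for m ∈ ℕ set δ(m,θ) := sup_{j≥0} | (1/m)·∑_{i=1}^m θ_{jm+i} − θ |. Let (y_i)_{i≥1} be a real sequence, let 0 ≤ l < n and m ≥ 1, and set ‖y‖ := max_{l<i≤n} |y_i| and ‖Δy‖ := max_{l<i<n} |y_{i+1}−y_i|. Then |∑_{i=l+1}^n (θ_i − θ)·y_i| ≤ (2mθ*' + n·δ(m,θ))·‖y‖ + θ_*·(nm/8)·‖Δy‖. -/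

import Mathlib

open Finset



lemma gaussIcc (m : ℕ) : ∑ t ∈ Icc 1 m, (t : ℝ) = m * (m + 1) / 2 := by
  induction m with
  | zero => simp
  | succ k ih =>
      rw [Finset.sum_Icc_succ_top (by omega : 1 ≤ k + 1), ih]
      push_cast; ring

lemma abelId (h b : ℕ → ℝ) : ∀ m : ℕ, 1 ≤ m →
    ∑ i ∈ Icc 1 m, h i * b i =
      (∑ t ∈ Icc 1 (m - 1), (∑ i ∈ Icc 1 t, h i) * (b t - b (t + 1))) +
        (∑ i ∈ Icc 1 m, h i) * b m := by
  intro m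
  induction m with
  | zero => omega
  | succ k ih =>
      intro _
      rcases Nat.eq_zero_or_pos k with hk | hk
      · subst hk; simp
      · rw [Finset.sum_Icc_succ_top (by omega : 1 ≤ k + 1), ih hk]
        have h1 : k + 1 - 1 = (k - 1) + 1 := by omega
        rw [h1, Finset.sum_Icc_succ_top (by omega : 1 ≤ (k - 1) + 1)]
        have h2 : k - 1 + 1 = k := by omega
        rw [h2, Finset.sum_Icc_succ_top (by omega : 1 ≤ k + 1)]
        ring

lemma blocksum (f : ℕ → ℝ) (m a : ℕ) : ∀ k : ℕ,
    ∑ i ∈ Ioc a (a + k * m), f i = ∑ j ∈ range k, ∑ i ∈ Icc 1 m, f (a + j * m + i) := by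
  intro k
  induction k with
  | zero => simp
  | succ k ih =>
      have hsplit : (∑ i ∈ Ioc a (a + k * m), f i) + ∑ i ∈ Ioc (a + k * m) (a + (k+1) * m), f i
          = ∑ i ∈ Ioc a (a + (k+1) * m), f i :=
        Finset.sum_Ioc_consecutive f (by omega) (by nlinarith [Nat.zero_le m])
      rw [← hsplit, ih, Finset.sum_range_succ]
      congr 1
      have : Ioc (a + k * m) (a + (k+1) * m) = Icc (a + k * m + 1) (a + k * m + m) := by
        rw [← Finset.Icc_add_one_left_eq_Ioc]; congr 1; ring
      rw [this]
      refine Finset.sum_nbij' (fun i => i - (a + k * m)) (fun i => a + k * m + i) ?_ ?_ ?_ ?_ ?_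
      all_goals intro i hi
      all_goals simp only [Finset.mem_Icc] at hi ⊢
      · omega
      · omega
      · omega
      · omega
      · congr 1; omega

lemma sum_abs_le_card (s : Finset ℕ) (f : ℕ → ℝ) (C : ℝ) (h : ∀ i ∈ s, |f i| ≤ C) :
    |∑ i ∈ s, f i| ≤ s.card * C := by
  calc |∑ i ∈ s, f i| ≤ ∑ i ∈ s, |f i| := Finset.abs_sum_le_sum_abs _ _
    _ ≤ s.card * C := by
        have := Finset.sum_le_card_nsmul s (fun i => |f i|) C h
        simpa using this

section supHelpers

variable (s : Finset ℕ) (f : ℕ → ℝ)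

lemma bsup_eval (j : ℕ) : (⨆ _ : j ∈ s, f j) = if j ∈ s then f j else 0 := by
  by_cases hj : j ∈ s
  · simp [hj]
  · rw [ciSup_neg hj, Real.sSup_empty, if_neg hj]

lemma bsup_bdd (hf : ∀ i, 0 ≤ f i) :
    BddAbove (Set.range fun j => ⨆ _ : j ∈ s, f j) := by
  refine ⟨∑ i ∈ s, f i, ?_⟩
  rintro x ⟨j, rfl⟩
  simp only [bsup_eval]
  by_cases hj : j ∈ s
  · simp only [hj, if_true]
    exact Finset.single_le_sum (fun i _ => hf i) hj
  · simp only [hj, if_false]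
    exact Finset.sum_nonneg (fun i _ => hf i)

lemma le_bsup (hf : ∀ i, 0 ≤ f i) {i : ℕ} (hi : i ∈ s) : f i ≤ ⨆ j ∈ s, f j := by
  have h1 : f i ≤ ⨆ _ : i ∈ s, f i := by rw [bsup_eval s f i, if_pos hi]
  exact h1.trans (le_ciSup (bsup_bdd s f hf) i)

lemma bsup_nonneg (hf : ∀ i, 0 ≤ f i) : 0 ≤ ⨆ j ∈ s, f j := by
  have : (0:ℝ) ≤ ⨆ _ : 0 ∈ s, f 0 := by
    rw [bsup_eval s f 0]
    by_cases h0 : 0 ∈ s <;> simp [h0, hf 0]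
  exact this.trans (le_ciSup (bsup_bdd s f hf) 0)

end supHelpers

lemma disc : ∀ (m : ℕ) (P : Finset ℕ), P ⊆ Icc 1 m →
    ∑ t ∈ Icc 1 (m - 1), |((P ∩ Icc 1 t).card : ℝ) - (P.card : ℝ) * (t : ℝ) / (m : ℝ)| ≤
      (P.card : ℝ) * ((m : ℝ) - (P.card : ℝ)) / 2 := by
  intro m
  induction m with
  | zero =>
      intro P hP
      have : P = ∅ := by simpa using hP
      subst this; simp
  | succ m ih =>
      intro P hP
      rcases Nat.eq_zero_or_pos m with hm0 | hm1
      · subst hm0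
        have hc : P.card ≤ 1 := by
          have := Finset.card_le_card hP
          simpa using this
        have h0 : ∑ t ∈ Icc 1 (0 : ℕ), |((P ∩ Icc 1 t).card : ℝ) - (P.card : ℝ) * (t : ℝ) / ((1:ℕ) : ℝ)| = 0 := by
          simp
        interval_cases h : P.card <;> simp_all
      -- main case : 1 ≤ m
      set P' := P.erase (m + 1) with hP'def
      have hP' : P' ⊆ Icc 1 m := by
        intro x hx
        have h1 := Finset.mem_of_mem_erase hx
        have h2 := Finset.ne_of_mem_erase hx
        have h3 := hP h1
        simp only [Finset.mem_Icc] at *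
        omega
      have hp'le : P'.card ≤ m := by
        have := Finset.card_le_card hP'
        simpa using this
      have hmR : (0:ℝ) < (m:ℝ) := by exact_mod_cast hm1
      have hm1R : (0:ℝ) < (m:ℝ) + 1 := by positivity
      have hinter : ∀ t ∈ Icc 1 m, P ∩ Icc 1 t = P' ∩ Icc 1 t := by
        intro t ht
        simp only [Finset.mem_Icc] at ht
        ext x
        simp only [Finset.mem_inter, Finset.mem_Icc, hP'def, Finset.mem_erase]
        constructor
        · rintro ⟨h1, h2, h3⟩; exact ⟨⟨by omega, h1⟩, h2, h3⟩
        · rintro ⟨⟨_, h1⟩, h2, h3⟩; exact ⟨h1, h2, h3⟩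
      set c : ℝ := (P'.card : ℝ) / m - (P.card : ℝ) / (m + 1) with hc
      have hmain : ∀ t ∈ Icc 1 m,
          |((P ∩ Icc 1 t).card : ℝ) - (P.card : ℝ) * (t : ℝ) / ((m:ℝ) + 1)| ≤
            |((P' ∩ Icc 1 t).card : ℝ) - (P'.card : ℝ) * (t : ℝ) / (m : ℝ)| + |c| * t := by
        intro t ht
        rw [hinter t ht]
        have : ((P' ∩ Icc 1 t).card : ℝ) - (P.card : ℝ) * (t : ℝ) / ((m:ℝ) + 1) =
            (((P' ∩ Icc 1 t).card : ℝ) - (P'.card : ℝ) * (t : ℝ) / (m : ℝ)) + c * t := by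
          rw [hc]; field_simp; ring
        rw [this]
        refine (abs_add_le _ _).trans ?_
        rw [abs_mul, abs_of_nonneg (by positivity : (0:ℝ) ≤ (t:ℝ))]
      have hstep1 : ∑ t ∈ Icc 1 (m + 1 - 1), |((P ∩ Icc 1 t).card : ℝ) - (P.card : ℝ) * (t:ℝ) / ((m+1 : ℕ):ℝ)| ≤
          (∑ t ∈ Icc 1 m, |((P' ∩ Icc 1 t).card : ℝ) - (P'.card : ℝ) * (t:ℝ) / (m:ℝ)|) + |c| * ((m:ℝ) * (m+1) / 2) := by
        have h1 : (m + 1 - 1) = m := by omega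
        rw [h1]
        calc ∑ t ∈ Icc 1 m, |((P ∩ Icc 1 t).card : ℝ) - (P.card : ℝ) * (t:ℝ) / ((m+1:ℕ):ℝ)|
            ≤ ∑ t ∈ Icc 1 m, (|((P' ∩ Icc 1 t).card : ℝ) - (P'.card : ℝ) * (t:ℝ) / (m:ℝ)| + |c| * t) := by
              refine Finset.sum_le_sum ?_
              intro t ht
              have := hmain t ht
              push_cast at this ⊢
              exact this
          _ = _ := by
              rw [Finset.sum_add_distrib, ← Finset.mul_sum, gaussIcc]
      have hlast : |((P' ∩ Icc 1 m).card : ℝ) - (P'.card : ℝ) * (m:ℝ) / (m:ℝ)| = 0 := by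
        rw [Finset.inter_eq_left.mpr hP']
        rw [mul_div_assoc, div_self (ne_of_gt hmR), mul_one, sub_self, abs_zero]
      have hsplit : ∑ t ∈ Icc 1 m, |((P' ∩ Icc 1 t).card : ℝ) - (P'.card : ℝ) * (t:ℝ) / (m:ℝ)| =
          ∑ t ∈ Icc 1 (m - 1), |((P' ∩ Icc 1 t).card : ℝ) - (P'.card : ℝ) * (t:ℝ) / (m:ℝ)| := by
        have h2 : m = (m - 1) + 1 := by omega
        rw [h2, Finset.sum_Icc_succ_top (by omega : 1 ≤ (m-1)+1), ← h2, hlast, add_zero]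
      have hih := ih P' hP'
      by_cases hmem : (m + 1) ∈ P
      · have hcard : (P.card : ℝ) = (P'.card : ℝ) + 1 := by
          have := Finset.card_erase_add_one hmem
          rw [hP'def]
          exact_mod_cast (by omega : P.card = (P.erase (m+1)).card + 1)
        have hp'R : (P'.card : ℝ) ≤ (m:ℝ) := by exact_mod_cast hp'le
        have hcval : c = -(((m:ℝ) - P'.card) / ((m:ℝ) * ((m:ℝ)+1))) := by
          rw [hc, hcard]; field_simp; ring
        have hId : |c| * ((m:ℝ) * ((m:ℝ)+1) / 2) = ((m:ℝ) - P'.card) / 2 := by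
          rw [hcval, abs_neg, abs_of_nonneg (div_nonneg (by linarith) (by positivity))]
          field_simp
        calc _ ≤ _ := hstep1
          _ ≤ (P'.card : ℝ) * ((m:ℝ) - P'.card) / 2 + |c| * ((m:ℝ)*((m:ℝ)+1)/2) := by
              rw [hsplit]; gcongr
          _ ≤ (P.card : ℝ) * (((m+1:ℕ):ℝ) - P.card) / 2 := by
              rw [hId, hcard]; push_cast; ring_nf
              exact le_rfl
      · have hPP : P' = P := by rw [hP'def]; exact Finset.erase_eq_of_notMem hmem
        have hcard : (P'.card : ℝ) = (P.card : ℝ) := by rw [hPP]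
        have hpR : (0:ℝ) ≤ (P.card : ℝ) := by positivity
        have hcval : c = (P.card : ℝ) / ((m:ℝ) * ((m:ℝ)+1)) := by
          rw [hc, hcard]; field_simp; ring
        have hId : |c| * ((m:ℝ) * ((m:ℝ)+1) / 2) = (P.card : ℝ) / 2 := by
          rw [hcval, abs_of_nonneg (div_nonneg hpR (by positivity))]
          field_simp
        calc _ ≤ _ := hstep1
          _ ≤ (P'.card : ℝ) * ((m:ℝ) - P'.card) / 2 + |c| * ((m:ℝ)*((m:ℝ)+1)/2) := by
              rw [hsplit]; gcongr
          _ ≤ (P.card : ℝ) * (((m+1:ℕ):ℝ) - P.card) / 2 := by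
              rw [hId, hcard]; push_cast; ring_nf
              exact le_rfl
lemma perset (m : ℕ) (hm : 1 ≤ m) (b : ℕ → ℝ) (D : ℝ) (hD : 0 ≤ D)
    (hb0 : ∑ i ∈ Icc 1 m, b i = 0)
    (hlip : ∀ t ∈ Icc 1 (m - 1), |b (t + 1) - b t| ≤ D)
    (P : Finset ℕ) (hP : P ⊆ Icc 1 m) :
    |∑ i ∈ P, b i| ≤ D * (m : ℝ) ^ 2 / 8 := by
  have hmR : (0:ℝ) < (m:ℝ) := by exact_mod_cast hm
  set p : ℝ := (P.card : ℝ) with hp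
  set h : ℕ → ℝ := fun i => (if i ∈ P then (1:ℝ) else 0) - p / m with hh
  have e1 : ∀ i, h i * b i = (if i ∈ P then b i else 0) - (p / m) * b i := by
    intro i
    by_cases hi : i ∈ P <;> simp [hh, hi] <;> ring
  have hsum1 : ∑ i ∈ Icc 1 m, h i * b i = ∑ i ∈ P, b i := by
    rw [Finset.sum_congr rfl (fun i _ => e1 i), Finset.sum_sub_distrib, ← Finset.mul_sum, hb0,
      mul_zero, sub_zero, Finset.sum_ite_mem, Finset.inter_eq_right.mpr hP]
  have hHval : ∀ t, t ≤ m → ∑ i ∈ Icc 1 t, h i = ((P ∩ Icc 1 t).card : ℝ) - p * t / m := by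
    intro t ht
    rw [hh]
    rw [Finset.sum_sub_distrib, Finset.sum_const, Finset.sum_ite_mem]
    rw [Finset.inter_comm]
    simp [Nat.card_Icc]
    ring
  have hHm : ∑ i ∈ Icc 1 m, h i = 0 := by
    rw [hHval m le_rfl, Finset.inter_comm, Finset.inter_eq_right.mpr hP,
      mul_div_assoc, div_self (ne_of_gt hmR), mul_one, sub_self]
  have habel := abelId h b m hm
  rw [hsum1, hHm, zero_mul, add_zero] at habel
  rw [habel]
  calc |∑ t ∈ Icc 1 (m-1), (∑ i ∈ Icc 1 t, h i) * (b t - b (t+1))|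
      ≤ ∑ t ∈ Icc 1 (m-1), |(∑ i ∈ Icc 1 t, h i)| * |b t - b (t+1)| := by
        refine (Finset.abs_sum_le_sum_abs _ _).trans ?_
        refine le_of_eq (Finset.sum_congr rfl ?_)
        intro t _; rw [abs_mul]
    _ ≤ ∑ t ∈ Icc 1 (m-1), |(∑ i ∈ Icc 1 t, h i)| * D := by
        refine Finset.sum_le_sum ?_
        intro t ht
        have := hlip t ht
        rw [abs_sub_comm] at this
        exact mul_le_mul_of_nonneg_left this (abs_nonneg _)
    _ = D * ∑ t ∈ Icc 1 (m-1), |(∑ i ∈ Icc 1 t, h i)| := by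
        rw [Finset.mul_sum]; exact Finset.sum_congr rfl (fun t _ => mul_comm _ _)
    _ ≤ D * (p * ((m:ℝ) - p) / 2) := by
        refine mul_le_mul_of_nonneg_left ?_ hD
        have hrw : ∀ t ∈ Icc 1 (m-1), |(∑ i ∈ Icc 1 t, h i)| =
            |((P ∩ Icc 1 t).card : ℝ) - p * t / m| := by
          intro t ht
          simp only [Finset.mem_Icc] at ht
          rw [hHval t (by omega)]
        rw [Finset.sum_congr rfl hrw]
        exact disc m P hP
    _ ≤ D * (m : ℝ) ^ 2 / 8 := by
        have hple : p ≤ (m:ℝ) := by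
          rw [hp]
          exact_mod_cast (Finset.card_le_card hP).trans (by simp [Nat.card_Icc])
        have hp0 : (0:ℝ) ≤ p := by rw [hp]; positivity
        nlinarith [sq_nonneg ((m:ℝ) - 2*p)]

lemma blockineq (m : ℕ) (hm : 1 ≤ m) (a b : ℕ → ℝ) (A D : ℝ) (hD : 0 ≤ D)
    (ha : ∀ i ∈ Icc 1 m, 0 ≤ a i ∧ a i ≤ A)
    (hb0 : ∑ i ∈ Icc 1 m, b i = 0)
    (hlip : ∀ t ∈ Icc 1 (m - 1), |b (t + 1) - b t| ≤ D) :
    |∑ i ∈ Icc 1 m, a i * b i| ≤ A * (D * (m : ℝ) ^ 2 / 8) := by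
  have h1m : (1:ℕ) ∈ Icc 1 m := by simp [hm]
  have hA0 : 0 ≤ A := le_trans (ha 1 h1m).1 (ha 1 h1m).2
  set P := (Icc 1 m).filter (fun i => 0 < b i) with hPdef
  set N := (Icc 1 m).filter (fun i => b i < 0) with hNdef
  have hup : ∑ i ∈ Icc 1 m, a i * b i ≤ A * ∑ i ∈ P, b i := by
    rw [← Finset.sum_filter_add_sum_filter_not (Icc 1 m) (fun i => 0 < b i) (fun i => a i * b i)]
    have hneg : ∑ i ∈ (Icc 1 m).filter (fun i => ¬ 0 < b i), a i * b i ≤ 0 := by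
      refine Finset.sum_nonpos ?_
      intro i hi
      simp only [Finset.mem_filter, not_lt] at hi
      exact mul_nonpos_of_nonneg_of_nonpos (ha i hi.1).1 hi.2
    have hpos : ∑ i ∈ P, a i * b i ≤ ∑ i ∈ P, A * b i := by
      refine Finset.sum_le_sum ?_
      intro i hi
      simp only [hPdef, Finset.mem_filter] at hi
      exact mul_le_mul_of_nonneg_right (ha i hi.1).2 (le_of_lt hi.2)
    rw [Finset.mul_sum]
    calc ∑ i ∈ P, a i * b i + ∑ i ∈ (Icc 1 m).filter (fun i => ¬ 0 < b i), a i * b i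
        ≤ ∑ i ∈ P, a i * b i + 0 := by linarith
      _ = ∑ i ∈ P, a i * b i := by ring
      _ ≤ ∑ i ∈ P, A * b i := hpos
  have hlo : A * ∑ i ∈ N, b i ≤ ∑ i ∈ Icc 1 m, a i * b i := by
    rw [← Finset.sum_filter_add_sum_filter_not (Icc 1 m) (fun i => b i < 0) (fun i => a i * b i)]
    have hnn2 : 0 ≤ ∑ i ∈ (Icc 1 m).filter (fun i => ¬ b i < 0), a i * b i := by
      refine Finset.sum_nonneg ?_
      intro i hi
      simp only [Finset.mem_filter, not_lt] at hi
      exact mul_nonneg (ha i hi.1).1 hi.2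
    have hposN : ∑ i ∈ N, A * b i ≤ ∑ i ∈ N, a i * b i := by
      refine Finset.sum_le_sum ?_
      intro i hi
      simp only [hNdef, Finset.mem_filter] at hi
      exact mul_le_mul_of_nonpos_right (ha i hi.1).2 (le_of_lt hi.2)
    rw [Finset.mul_sum]
    calc ∑ i ∈ N, A * b i ≤ ∑ i ∈ N, a i * b i := hposN
      _ ≤ ∑ i ∈ N, a i * b i + ∑ i ∈ (Icc 1 m).filter (fun i => ¬ b i < 0), a i * b i := by
          linarith
  have hPb := perset m hm b D hD hb0 hlip P (Finset.filter_subset _ _)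
  have hNb := perset m hm b D hD hb0 hlip N (Finset.filter_subset _ _)
  rw [abs_le] at hPb hNb ⊢
  constructor
  · calc -(A * (D * (m:ℝ)^2/8)) ≤ A * ∑ i ∈ N, b i := by
          rw [neg_le]
          calc -(A * ∑ i ∈ N, b i) = A * (-(∑ i ∈ N, b i)) := by ring
            _ ≤ A * (D * (m:ℝ)^2/8) := mul_le_mul_of_nonneg_left (by linarith [hNb.1]) hA0
      _ ≤ _ := hlo
  · calc ∑ i ∈ Icc 1 m, a i * b i ≤ A * ∑ i ∈ P, b i := hup
      _ ≤ A * (D * (m:ℝ)^2/8) := mul_le_mul_of_nonneg_left hPb.2 hA0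

/-- Lemma 5.1, first inequality. Here `θ_* = ⨆_{i≥1} θᵢ`, `θ*' = max(θ, θ_*)` and
`δ(m,θ) = sup_{j≥0} |(1/m)∑_{i=1}^m θ_{jm+i} − θ|`. -/
theorem stmt3 (θ : ℝ) (hθ : 0 < θ) (θi : ℕ → ℝ) (hnn : ∀ i, 0 ≤ θi i)
    (hbdd : BddAbove (Set.range fun i => θi (i + 1)))
    (y : ℕ → ℝ) (l n m : ℕ) (hln : l < n) (hm : 1 ≤ m) :
    |∑ i ∈ Icc (l + 1) n, (θi i - θ) * y i| ≤
      (2 * m * max θ (⨆ i, θi (i + 1)) +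
          n * ⨆ j : ℕ, |(1 / (m : ℝ)) * ∑ i ∈ Icc 1 m, θi (j * m + i) - θ|) *
        (⨆ i ∈ Icc (l + 1) n, |y i|) +
      (⨆ i, θi (i + 1)) * ((n : ℝ) * m / 8) * (⨆ i ∈ Ico (l + 1) n, |y (i + 1) - y i|) := by
  have hmR : (0:ℝ) < (m:ℝ) := by exact_mod_cast hm
  set θstar : ℝ := ⨆ i, θi (i + 1) with hθstar
  set M : ℝ := max θ θstar with hMdef
  set δ : ℝ := ⨆ j : ℕ, |(1 / (m : ℝ)) * ∑ i ∈ Icc 1 m, θi (j * m + i) - θ| with hδdef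
  set Y : ℝ := ⨆ i ∈ Icc (l + 1) n, |y i| with hYdef
  set Dv : ℝ := ⨆ i ∈ Ico (l + 1) n, |y (i + 1) - y i| with hDvdef
  -- basic facts
  have hθub : ∀ v : ℕ, 1 ≤ v → θi v ≤ θstar := by
    intro v hv
    have h1 : θi ((v - 1) + 1) ≤ θstar := le_ciSup hbdd (v - 1)
    rwa [(by omega : (v - 1) + 1 = v)] at h1
  have hθs0 : 0 ≤ θstar := (hnn 1).trans (hθub 1 le_rfl)
  have hM0 : (0:ℝ) ≤ M := le_trans (le_of_lt hθ) (le_max_left _ _)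
  have habsM : ∀ v : ℕ, 1 ≤ v → |θi v - θ| ≤ M := by
    intro v hv
    rw [abs_le]
    constructor
    · have : θ ≤ M := le_max_left _ _
      have := hnn v
      linarith
    · have h2 : θi v ≤ θstar := hθub v hv
      have h3 : θstar ≤ M := le_max_right _ _
      linarith
  have hY : ∀ v, v ∈ Icc (l + 1) n → |y v| ≤ Y :=
    fun v hv => le_bsup _ _ (fun i => abs_nonneg (y i)) hv
  have hY0 : 0 ≤ Y := bsup_nonneg _ _ (fun i => abs_nonneg (y i))
  have hDel : ∀ v, v ∈ Ico (l + 1) n → |y (v + 1) - y v| ≤ Dv :=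
    fun v hv => le_bsup (Ico (l+1) n) (fun i => |y (i + 1) - y i|) (fun i => abs_nonneg _) hv
  have hD0 : 0 ≤ Dv := bsup_nonneg (Ico (l+1) n) (fun i => |y (i + 1) - y i|) (fun i => abs_nonneg _)
  have hδbdd : BddAbove (Set.range fun j : ℕ =>
      |(1 / (m : ℝ)) * ∑ i ∈ Icc 1 m, θi (j * m + i) - θ|) := by
    refine ⟨M, ?_⟩
    rintro x ⟨j, rfl⟩
    have hsum0 : 0 ≤ ∑ i ∈ Icc 1 m, θi (j * m + i) :=
      Finset.sum_nonneg fun i _ => hnn _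
    have hsumub : ∑ i ∈ Icc 1 m, θi (j * m + i) ≤ (m:ℝ) * θstar := by
      calc ∑ i ∈ Icc 1 m, θi (j * m + i) ≤ ∑ i ∈ Icc 1 m, θstar := by
            refine Finset.sum_le_sum ?_
            intro i hi
            simp only [Finset.mem_Icc] at hi
            exact hθub _ (by omega)
        _ = (m:ℝ) * θstar := by simp [Nat.card_Icc]
    rw [abs_le]
    constructor
    · have h1 : θ ≤ M := le_max_left _ _
      have h2 : 0 ≤ (1 / (m:ℝ)) * ∑ i ∈ Icc 1 m, θi (j * m + i) := by positivity
      linarith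
    · have h2 : (1 / (m:ℝ)) * ∑ i ∈ Icc 1 m, θi (j * m + i) ≤ θstar := by
        rw [div_mul_eq_mul_div, one_mul, div_le_iff₀ hmR]
        linarith [hsumub]
      have h3 : θstar ≤ M := le_max_right _ _
      linarith
  have hδ : ∀ j : ℕ, |(1 / (m : ℝ)) * ∑ i ∈ Icc 1 m, θi (j * m + i) - θ| ≤ δ :=
    fun j => le_ciSup hδbdd j
  have hδ0 : 0 ≤ δ := (abs_nonneg _).trans (hδ 0)
  -- crude bound on pieces
  have hcrude : ∀ s t : ℕ, Ioc s t ⊆ Icc (l + 1) n →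
      |∑ i ∈ Ioc s t, (θi i - θ) * y i| ≤ ((t - s : ℕ) : ℝ) * (M * Y) := by
    intro s t hsub
    have := sum_abs_le_card (Ioc s t) (fun i => (θi i - θ) * y i) (M * Y) ?_
    · rwa [Nat.card_Ioc] at this
    · intro i hi
      have hmem := hsub hi
      simp only [Finset.mem_Icc] at hmem
      rw [abs_mul]
      exact mul_le_mul (habsM i (by omega)) (hY i (by simp [Finset.mem_Icc]; omega))
        (abs_nonneg _) hM0
  -- block endpoints
  set j₀ : ℕ := (l + m - 1) / m with hj₀
  set j₁ : ℕ := n / m with hj₁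
  set A : ℕ := m * j₀ with hA
  set B : ℕ := m * j₁ with hB
  have hdm1 : A + (l + m - 1) % m = l + m - 1 := by rw [hA, hj₀]; exact Nat.div_add_mod _ _
  have hml1 : (l + m - 1) % m < m := Nat.mod_lt _ (by omega)
  have hdm2 : B + n % m = n := by rw [hB, hj₁]; exact Nat.div_add_mod _ _
  have hml2 : n % m < m := Nat.mod_lt _ (by omega)
  have hlA : l ≤ A := by omega
  have hAu : A ≤ l + m - 1 := by omega
  have hBn : B ≤ n := by omega
  have hnB : n < B + m := by omega
  have hIcc_Ioc : Icc (l + 1) n = Ioc l n := Finset.Icc_add_one_left_eq_Ioc l n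
  rw [hIcc_Ioc]
  by_cases hab : B < A
  · -- degenerate: few points
    have hj10 : j₁ < j₀ := by
      by_contra hcon
      push_neg at hcon
      have hmul : m * j₀ ≤ m * j₁ := Nat.mul_le_mul le_rfl hcon
      omega
    have hBmA : B + m ≤ A := by
      have h1 : j₁ + 1 ≤ j₀ := hj10
      have h2 : m * (j₁ + 1) ≤ m * j₀ := Nat.mul_le_mul le_rfl h1
      rw [Nat.mul_succ] at h2
      omega
    have hnl : n - l ≤ 2 * m := by omega
    have hsub : Ioc l n ⊆ Icc (l + 1) n := by rw [hIcc_Ioc]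
    have h1 := hcrude l n hsub
    have h2 : ((n - l : ℕ) : ℝ) * (M * Y) ≤ 2 * m * M * Y := by
      have : ((n - l : ℕ) : ℝ) ≤ 2 * (m:ℝ) := by exact_mod_cast hnl
      nlinarith [mul_nonneg hM0 hY0]
    have h3 : 0 ≤ (n:ℝ) * δ * Y := by positivity
    have h4 : 0 ≤ θstar * ((n:ℝ) * m / 8) * Dv := by positivity
    calc |∑ i ∈ Ioc l n, (θi i - θ) * y i| ≤ _ := h1
      _ ≤ 2 * m * M * Y := h2
      _ ≤ (2 * m * M + n * δ) * Y + θstar * ((n:ℝ) * m / 8) * Dv := by nlinarith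
  · push_neg at hab
    have hab' : m * j₀ ≤ m * j₁ := by rw [← hA, ← hB]; exact hab
    have hj01 : j₀ ≤ j₁ := Nat.le_of_mul_le_mul_left hab' (by omega)
    set k : ℕ := j₁ - j₀ with hk
    have hBeq : B = A + k * m := by
      rw [hA, hB, hk, mul_comm (j₁ - j₀) m, ← Nat.mul_add, Nat.add_sub_cancel' hj01]
    have hkm : A + k * m ≤ n := by omega
    -- split
    have hsplit1 : (∑ i ∈ Ioc l A, (θi i - θ) * y i) + ∑ i ∈ Ioc A n, (θi i - θ) * y i
        = ∑ i ∈ Ioc l n, (θi i - θ) * y i :=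
      Finset.sum_Ioc_consecutive _ hlA (by omega)
    have hsplit2 : (∑ i ∈ Ioc A B, (θi i - θ) * y i) + ∑ i ∈ Ioc B n, (θi i - θ) * y i
        = ∑ i ∈ Ioc A n, (θi i - θ) * y i :=
      Finset.sum_Ioc_consecutive _ hab hBn
    -- boundary pieces
    have hb1 : |∑ i ∈ Ioc l A, (θi i - θ) * y i| ≤ ((A - l : ℕ) : ℝ) * (M * Y) := by
      refine hcrude l A ?_
      intro i hi
      simp only [Finset.mem_Ioc, Finset.mem_Icc] at *
      omega
    have hb3 : |∑ i ∈ Ioc B n, (θi i - θ) * y i| ≤ ((n - B : ℕ) : ℝ) * (M * Y) := by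
      refine hcrude B n ?_
      intro i hi
      simp only [Finset.mem_Ioc, Finset.mem_Icc] at *
      omega
    -- middle piece : blocks
    have hmid : |∑ i ∈ Ioc A B, (θi i - θ) * y i| ≤
        (k:ℝ) * ((m:ℝ) * δ * Y + θstar * (Dv * (m:ℝ)^2 / 8)) := by
      rw [hBeq, blocksum (fun i => (θi i - θ) * y i) m A k]
      have hblock : ∀ j ∈ range k,
          |∑ i ∈ Icc 1 m, (θi (A + j * m + i) - θ) * y (A + j * m + i)| ≤
            (m:ℝ) * δ * Y + θstar * (Dv * (m:ℝ)^2 / 8) := by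
        intro j hj
        simp only [Finset.mem_range] at hj
        set c : ℕ := A + j * m with hc
        have hcm : c + m ≤ n := by
          have h1 : j + 1 ≤ k := hj
          have h2 : (j + 1) * m ≤ k * m := Nat.mul_le_mul h1 le_rfl
          rw [Nat.succ_mul] at h2
          omega
        have hidx : ∀ i, i ∈ Icc 1 m → c + i ∈ Icc (l + 1) n := by
          intro i hi
          simp only [Finset.mem_Icc] at *
          omega
        set S : ℝ := ∑ i ∈ Icc 1 m, y (c + i) with hS
        set ybar : ℝ := S / m with hybar
        set bf : ℕ → ℝ := fun i => y (c + i) - ybar with hbf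
        have hyS : ∑ i ∈ Icc 1 m, y (c + i) = (m:ℝ) * ybar := by
          rw [hybar, ← hS]
          field_simp
        have hb0 : ∑ i ∈ Icc 1 m, bf i = 0 := by
          rw [hbf]
          simp only
          rw [Finset.sum_sub_distrib, hyS, Finset.sum_const, Nat.card_Icc,
            Nat.add_sub_cancel, nsmul_eq_mul]
          ring
        have hblip : ∀ t ∈ Icc 1 (m - 1), |bf (t + 1) - bf t| ≤ Dv := by
          intro t ht
          simp only [Finset.mem_Icc] at ht
          have h1 : bf (t + 1) - bf t = y ((c + t) + 1) - y (c + t) := by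
            rw [hbf]
            simp only
            rw [(by omega : c + (t + 1) = (c + t) + 1)]
            ring
          rw [h1]
          refine hDel (c + t) ?_
          simp only [Finset.mem_Ico]
          omega
        have hθbounds : ∀ i ∈ Icc 1 m, 0 ≤ θi (c + i) ∧ θi (c + i) ≤ θstar := by
          intro i hi
          simp only [Finset.mem_Icc] at hi
          exact ⟨hnn _, hθub _ (by omega)⟩
        have e2 : ∑ i ∈ Icc 1 m, (θi (c + i) - θ) * y (c + i)
            = (∑ i ∈ Icc 1 m, θi (c + i) * bf i)
              + ((∑ i ∈ Icc 1 m, θi (c + i)) - (m:ℝ) * θ) * ybar := by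
          have expand : ∀ i, (θi (c + i) - θ) * y (c + i)
              = (θi (c + i) * bf i + θi (c + i) * ybar) - θ * y (c + i) := by
            intro i
            rw [hbf]
            simp only
            ring
          rw [Finset.sum_congr rfl (fun i _ => expand i), Finset.sum_sub_distrib,
            Finset.sum_add_distrib, ← Finset.mul_sum, hyS, ← Finset.sum_mul]
          ring
        rw [e2]
        have hterm1 : |∑ i ∈ Icc 1 m, θi (c + i) * bf i| ≤ θstar * (Dv * (m:ℝ)^2 / 8) :=
          blockineq m hm (fun i => θi (c + i)) bf θstar Dv hD0 hθbounds hb0 hblip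
        have hterm2 : |((∑ i ∈ Icc 1 m, θi (c + i)) - (m:ℝ) * θ) * ybar| ≤ (m:ℝ) * δ * Y := by
          rw [abs_mul]
          have hcJ : ∀ i, c + i = (j₀ + j) * m + i := by
            intro i
            rw [hc, hA]
            ring
          have hsc : ∑ i ∈ Icc 1 m, θi (c + i) = ∑ i ∈ Icc 1 m, θi ((j₀ + j) * m + i) :=
            Finset.sum_congr rfl (fun i _ => by rw [hcJ i])
          have hfac : (∑ i ∈ Icc 1 m, θi (c + i)) - (m:ℝ) * θ
              = (m:ℝ) * ((1 / (m:ℝ)) * (∑ i ∈ Icc 1 m, θi ((j₀ + j) * m + i)) - θ) := by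
            rw [hsc]
            field_simp
          have habs1 : |(∑ i ∈ Icc 1 m, θi (c + i)) - (m:ℝ) * θ| ≤ (m:ℝ) * δ := by
            rw [hfac, abs_mul, abs_of_pos hmR]
            exact mul_le_mul_of_nonneg_left (hδ (j₀ + j)) (le_of_lt hmR)
          have habs2 : |ybar| ≤ Y := by
            rw [hybar, abs_div, abs_of_pos hmR, div_le_iff₀ hmR]
            calc |S| ≤ ∑ i ∈ Icc 1 m, |y (c + i)| := by
                  rw [hS]; exact Finset.abs_sum_le_sum_abs _ _
              _ ≤ ∑ i ∈ Icc 1 m, Y := Finset.sum_le_sum (fun i hi => hY _ (hidx i hi))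
              _ = (m:ℝ) * Y := by simp [Nat.card_Icc]
              _ = Y * (m:ℝ) := by ring
          calc |(∑ i ∈ Icc 1 m, θi (c + i)) - (m:ℝ) * θ| * |ybar|
              ≤ ((m:ℝ) * δ) * Y := mul_le_mul habs1 habs2 (abs_nonneg _) (by positivity)
            _ = (m:ℝ) * δ * Y := by ring
        calc |(∑ i ∈ Icc 1 m, θi (c + i) * bf i)
              + ((∑ i ∈ Icc 1 m, θi (c + i)) - (m:ℝ) * θ) * ybar|
            ≤ |∑ i ∈ Icc 1 m, θi (c + i) * bf i|
              + |((∑ i ∈ Icc 1 m, θi (c + i)) - (m:ℝ) * θ) * ybar| := abs_add_le _ _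
          _ ≤ θstar * (Dv * (m:ℝ)^2 / 8) + (m:ℝ) * δ * Y := add_le_add hterm1 hterm2
          _ = (m:ℝ) * δ * Y + θstar * (Dv * (m:ℝ)^2 / 8) := by ring
      calc |∑ j ∈ range k, ∑ i ∈ Icc 1 m, (θi (A + j * m + i) - θ) * y (A + j * m + i)|
          ≤ ∑ j ∈ range k, |∑ i ∈ Icc 1 m, (θi (A + j * m + i) - θ) * y (A + j * m + i)| :=
            Finset.abs_sum_le_sum_abs _ _
        _ ≤ (k:ℝ) * ((m:ℝ) * δ * Y + θstar * (Dv * (m:ℝ)^2 / 8)) := by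
            have := Finset.sum_le_card_nsmul (range k) _ _ hblock
            rwa [Finset.card_range, nsmul_eq_mul] at this
    -- combine
    have hAl : ((A - l : ℕ) : ℝ) ≤ (m : ℝ) := by
      have : A - l ≤ m := by omega
      exact_mod_cast this
    have hnB2 : ((n - B : ℕ) : ℝ) ≤ (m : ℝ) := by
      have : n - B ≤ m := by omega
      exact_mod_cast this
    have hkmR : (k:ℝ) * (m:ℝ) ≤ (n:ℝ) := by
      have : k * m ≤ n := by omega
      exact_mod_cast this
    have htot : |∑ i ∈ Ioc l n, (θi i - θ) * y i| ≤
        ((A - l : ℕ) : ℝ) * (M * Y) + (k:ℝ) * ((m:ℝ) * δ * Y + θstar * (Dv * (m:ℝ)^2 / 8))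
          + ((n - B : ℕ) : ℝ) * (M * Y) := by
      rw [← hsplit1, ← hsplit2]
      have t1 := abs_add_le (∑ i ∈ Ioc l A, (θi i - θ) * y i)
        ((∑ i ∈ Ioc A B, (θi i - θ) * y i) + ∑ i ∈ Ioc B n, (θi i - θ) * y i)
      have t2 := abs_add_le (∑ i ∈ Ioc A B, (θi i - θ) * y i) (∑ i ∈ Ioc B n, (θi i - θ) * y i)
      linarith [hb1, hmid, hb3]
    refine htot.trans ?_
    have hMY : 0 ≤ M * Y := mul_nonneg hM0 hY0
    have h5 : ((A - l : ℕ) : ℝ) * (M * Y) + ((n - B : ℕ) : ℝ) * (M * Y) ≤ 2 * (m:ℝ) * M * Y := by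
      calc ((A - l : ℕ) : ℝ) * (M * Y) + ((n - B : ℕ) : ℝ) * (M * Y)
          ≤ (m:ℝ) * (M * Y) + (m:ℝ) * (M * Y) :=
            add_le_add (mul_le_mul_of_nonneg_right hAl hMY)
              (mul_le_mul_of_nonneg_right hnB2 hMY)
        _ = 2 * (m:ℝ) * M * Y := by ring
    have h6 : (k:ℝ) * ((m:ℝ) * δ * Y) ≤ (n:ℝ) * δ * Y := by
      have h7 : (k:ℝ) * ((m:ℝ) * δ * Y) = ((k:ℝ) * (m:ℝ)) * (δ * Y) := by ring
      have h8 : (n:ℝ) * δ * Y = (n:ℝ) * (δ * Y) := by ring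
      rw [h7, h8]
      exact mul_le_mul_of_nonneg_right hkmR (by positivity)
    have h9 : (k:ℝ) * (θstar * (Dv * (m:ℝ)^2 / 8)) ≤ θstar * ((n:ℝ) * m / 8) * Dv := by
      have h10 : (k:ℝ) * (θstar * (Dv * (m:ℝ)^2 / 8))
          = ((k:ℝ) * (m:ℝ)) * (θstar * Dv * (m:ℝ) / 8) := by ring
      have h11 : θstar * ((n:ℝ) * m / 8) * Dv = (n:ℝ) * (θstar * Dv * (m:ℝ) / 8) := by ring
      rw [h10, h11]
      exact mul_le_mul_of_nonneg_right hkmR (by positivity)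
    have hexp : (k:ℝ) * ((m:ℝ) * δ * Y + θstar * (Dv * (m:ℝ)^2 / 8))
        = (k:ℝ) * ((m:ℝ) * δ * Y) + (k:ℝ) * (θstar * (Dv * (m:ℝ)^2 / 8)) := by ring
    have hRHS : (2 * (m:ℝ) * M + (n:ℝ) * δ) * Y + θstar * ((n:ℝ) * (m:ℝ) / 8) * Dv
        = 2 * (m:ℝ) * M * Y + (n:ℝ) * δ * Y + θstar * ((n:ℝ) * (m:ℝ) / 8) * Dv := by ring
    rw [hRHS, hexp]
    linarith [h5, h6, h9]
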